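/- Let β ≥ 0 and let A = (a_{n,k}) be a lower triangular infinite matrix of nonnegative real numbers with Σ_{k=0}^{n} a_{n,k} = 1 for every n. Suppose there is a constant C, independent of n and m, such that Σ_{k=0}^{m-1} (k+1)^β |a_{n,k}/(k+1)^β − a_{n,k+1}/(k+2)^β| ≤ C·a_{n,m} for all 0 ≤ m ≤ n. Then there is a constant C', independent of n, such that 1/(n+1) ≤ C'·a_{n,n} for every n. -/

import Mathlib

open Real MeasureTheory

theorem HBV_ann_lower_bound
    (β : ℝ) (hβ : 0 ≤ β)
    (a : ℕ → ℕ → ℝ) (htri : ∀ n k : ℕ, n < k → a n k = 0)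
    (hnn : ∀ n k : ℕ, 0 ≤ a n k)
    (hrow : ∀ n : ℕ, ∑ k ∈ Finset.range (n + 1), a n k = 1)
    (C : ℝ) (hC : 0 < C)
    (hA : ∀ n m : ℕ, m ≤ n →
      ∑ k ∈ Finset.range m,
        ((k : ℝ) + 1) ^ β * |a n k / ((k : ℝ) + 1) ^ β - a n (k + 1) / ((k : ℝ) + 2) ^ β|
        ≤ C * a n m)
    :
    ∃ C' : ℝ, 0 < C' ∧ ∀ n : ℕ, ((n : ℝ) + 1)⁻¹ ≤ C' * a n n := by
  refine ⟨1 + C, by linarith, fun n => ?_⟩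
  have hpow : ∀ j : ℕ, (0:ℝ) < ((j:ℝ) + 1) ^ β := by
    intro j
    exact Real.rpow_pos_of_pos (by positivity) β
  set f : ℕ → ℝ := fun j => a n j / ((j:ℝ) + 1) ^ β with hf
  -- key bound : for k ≤ n, a n k ≤ (1+C) * a n n
  have key : ∀ k : ℕ, k ≤ n → a n k ≤ (1 + C) * a n n := by
    intro k hkn
    have htel : ∑ j ∈ Finset.Ico k n, (f (j+1) - f j) = f n - f k := by
      rw [Finset.sum_Ico_eq_sub _ hkn, Finset.sum_range_sub f, Finset.sum_range_sub f]
      ring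
    have hfk : f k ≤ f n + ∑ j ∈ Finset.Ico k n, |f (j+1) - f j| := by
      have h1 : f k = f n - ∑ j ∈ Finset.Ico k n, (f (j+1) - f j) := by
        rw [htel]; ring
      have h2 : -(∑ j ∈ Finset.Ico k n, (f (j+1) - f j))
          ≤ ∑ j ∈ Finset.Ico k n, |f (j+1) - f j| := by
        calc -(∑ j ∈ Finset.Ico k n, (f (j+1) - f j))
            ≤ |∑ j ∈ Finset.Ico k n, (f (j+1) - f j)| := neg_le_abs _
          _ ≤ ∑ j ∈ Finset.Ico k n, |f (j+1) - f j| := Finset.abs_sum_le_sum_abs _ _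
      linarith
    -- bound each term
    have hterm : ∀ j ∈ Finset.Ico k n,
        |f (j+1) - f j| ≤ (((j:ℝ)+1)^β * |a n j / ((j:ℝ)+1)^β - a n (j+1) / ((j:ℝ)+2)^β|)
          / ((k:ℝ)+1)^β := by
      intro j hj
      obtain ⟨hjk, hjn⟩ := Finset.mem_Ico.mp hj
      have hle : ((k:ℝ)+1)^β ≤ ((j:ℝ)+1)^β := by
        apply Real.rpow_le_rpow (by positivity) _ hβ
        have : (k:ℝ) ≤ (j:ℝ) := by exact_mod_cast hjk
        linarith
      have habs : |f (j+1) - f j| = |a n j / ((j:ℝ)+1)^β - a n (j+1) / ((j:ℝ)+2)^β| := by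
        rw [abs_sub_comm]
        congr 2
        simp only [hf]
        push_cast
        ring_nf
      rw [habs, le_div_iff₀ (hpow k)]
      calc |a n j / ((j:ℝ)+1)^β - a n (j+1) / ((j:ℝ)+2)^β| * ((k:ℝ)+1)^β
          ≤ |a n j / ((j:ℝ)+1)^β - a n (j+1) / ((j:ℝ)+2)^β| * ((j:ℝ)+1)^β :=
            mul_le_mul_of_nonneg_left hle (abs_nonneg _)
        _ = ((j:ℝ)+1)^β * |a n j / ((j:ℝ)+1)^β - a n (j+1) / ((j:ℝ)+2)^β| := mul_comm _ _
    have hsum2 : ∑ j ∈ Finset.Ico k n, |f (j+1) - f j| ≤ C * a n n / ((k:ℝ)+1)^β := by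
      calc ∑ j ∈ Finset.Ico k n, |f (j+1) - f j|
          ≤ ∑ j ∈ Finset.Ico k n,
            (((j:ℝ)+1)^β * |a n j / ((j:ℝ)+1)^β - a n (j+1) / ((j:ℝ)+2)^β|) / ((k:ℝ)+1)^β :=
            Finset.sum_le_sum hterm
        _ = (∑ j ∈ Finset.Ico k n,
            ((j:ℝ)+1)^β * |a n j / ((j:ℝ)+1)^β - a n (j+1) / ((j:ℝ)+2)^β|) / ((k:ℝ)+1)^β := by
            rw [Finset.sum_div]
        _ ≤ (∑ j ∈ Finset.range n,
            ((j:ℝ)+1)^β * |a n j / ((j:ℝ)+1)^β - a n (j+1) / ((j:ℝ)+2)^β|) / ((k:ℝ)+1)^β := by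
            gcongr
            · intro x hx
              exact Finset.mem_range.mpr (Finset.mem_Ico.mp hx).2
        _ ≤ C * a n n / ((k:ℝ)+1)^β := by
            gcongr
            exact hA n n le_rfl
    have hkle : ((k:ℝ)+1)^β ≤ ((n:ℝ)+1)^β := by
      apply Real.rpow_le_rpow (by positivity) _ hβ
      have : (k:ℝ) ≤ (n:ℝ) := by exact_mod_cast hkn
      linarith
    have hank : a n k = f k * ((k:ℝ)+1)^β := by
      simp only [hf]
      exact (div_mul_cancel₀ _ (hpow k).ne').symm
    have hann : 0 ≤ a n n := hnn n n
    calc a n k = f k * ((k:ℝ)+1)^β := hank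
      _ ≤ (f n + C * a n n / ((k:ℝ)+1)^β) * ((k:ℝ)+1)^β := by
          apply mul_le_mul_of_nonneg_right _ (le_of_lt (hpow k))
          linarith
      _ = a n n * (((k:ℝ)+1)^β / ((n:ℝ)+1)^β) + C * a n n := by
          simp only [hf]
          field_simp
      _ ≤ a n n * 1 + C * a n n := by
          gcongr
          rw [div_le_one (hpow n)]
          exact hkle
      _ = (1+C) * a n n := by ring
  have hpos : (0:ℝ) < (n:ℝ) + 1 := by positivity
  have hsum : (1:ℝ) ≤ ((n:ℝ)+1) * ((1+C) * a n n) := by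
    have := hrow n
    calc (1:ℝ) = ∑ k ∈ Finset.range (n+1), a n k := (hrow n).symm
      _ ≤ ∑ k ∈ Finset.range (n+1), (1+C) * a n n := by
          apply Finset.sum_le_sum
          intro k hk
          exact key k (Nat.lt_succ_iff.mp (Finset.mem_range.mp hk))
      _ = ((n:ℝ)+1) * ((1+C) * a n n) := by
          rw [Finset.sum_const, Finset.card_range]
          push_cast; ring
  rw [inv_eq_one_div, div_le_iff₀ hpos]
  linarith [hsum]
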